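/- Let ρ be a positive definite density operator on a finite-dimensional Hilbert space H with eigenvalues λ₁,…,λₙ > 0. The commutation super operator D_ρ = -i(L_ρ - R_ρ)(L_ρ + R_ρ)⁻¹, where L_ρ(X) = ρX and R_ρ(X) = Xρ, has operator norm (with respect to the inner product ⟨X,Y⟩ = Tr X*(ρY + Yρ)/2) equal to max{|λ-μ|/(λ+μ) : λ, μ eigenvalues of ρ}, which is strictly less than 1. -/

import Mathlib

open Matrix
open scoped ComplexOrder
noncomputable section

theorem trace_formula' {n : ℕ} (U ρ X : Matrix (Fin n) (Fin n) ℂ) (lam : Fin n → ℝ)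
    (hU' : U * star U = 1)
    (hd : star U * ρ * U = diagonal (fun i => (lam i : ℂ))) :
    (Matrix.trace (Xᴴ * (ρ * X + X * ρ))).re
      = ∑ j, ∑ k, (lam j + lam k) * ‖(star U * X * U) j k‖^2 := by
  set d : Matrix (Fin n) (Fin n) ℂ := diagonal (fun i => (lam i : ℂ)) with hdd
  set Y := star U * X * U with hY
  have hT : ∀ A B : Matrix (Fin n) (Fin n) ℂ,
      star U * (A * B) * U = (star U * A * U) * (star U * B * U) := by
    intro A B
    calc star U * (A * B) * U = star U * (A * (U * star U) * B) * U := by rw [hU']; noncomm_ring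
      _ = (star U * A * U) * (star U * B * U) := by noncomm_ring
  have htr : ∀ A : Matrix (Fin n) (Fin n) ℂ, Matrix.trace (star U * A * U) = Matrix.trace A := by
    intro A
    rw [Matrix.trace_mul_comm, ← Matrix.mul_assoc, hU', Matrix.one_mul]
  have key : Matrix.trace (Xᴴ * (ρ * X + X * ρ)) = Matrix.trace (Yᴴ * (d * Y + Y * d)) := by
    have hYH : Yᴴ = star U * Xᴴ * U := by
      rw [hY]
      simp only [conjTranspose_mul, conjTranspose_conjTranspose]
      rw [← Matrix.star_eq_conjTranspose U, ← Matrix.star_eq_conjTranspose (star U), star_star]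
      noncomm_ring
    rw [← htr (Xᴴ * (ρ * X + X * ρ)), hT, Matrix.mul_add, Matrix.add_mul, hT, hT, hd, ← hY, ← hYH]
  have hB : ∀ j k, (d * Y + Y * d) j k = ((lam j : ℂ) + lam k) * Y j k := by
    intro j k
    simp only [Matrix.add_apply, hdd, Matrix.diagonal_mul, Matrix.mul_diagonal]
    ring
  have key2 : Matrix.trace (Yᴴ * (d * Y + Y * d))
      = ∑ k, ∑ j, (starRingEnd ℂ) (Y j k) * (((lam j : ℂ) + lam k) * Y j k) := by
    simp only [Matrix.trace, Matrix.diag_apply, Matrix.mul_apply, conjTranspose_apply, hB, RCLike.star_def]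
  have eR : ∀ j k : Fin n, ((starRingEnd ℂ) (Y j k) * (((lam j : ℂ) + lam k) * Y j k)).re
      = (lam j + lam k) * ‖Y j k‖^2 := by
    intro j k
    have h1 : (starRingEnd ℂ) (Y j k) * (((lam j : ℂ) + lam k) * Y j k)
        = ((lam j : ℂ) + lam k) * ((‖Y j k‖^2 : ℝ) : ℂ) := by
      have : (Y j k) * (starRingEnd ℂ) (Y j k) = ((‖Y j k‖^2 : ℝ) : ℂ) := by
        rw [Complex.mul_conj]
        norm_cast
        rw [Complex.normSq_eq_norm_sq]
      rw [← this]; ring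
    rw [h1, ← Complex.ofReal_add, ← Complex.ofReal_mul, Complex.ofReal_re]
  rw [key, key2, Complex.re_sum]
  rw [Finset.sum_comm]
  exact Finset.sum_congr rfl fun j _ => by rw [Complex.re_sum]; exact Finset.sum_congr rfl fun k _ => eR k j

theorem entry_eq' {n : ℕ} (U ρ X Z : Matrix (Fin n) (Fin n) ℂ) (lam : Fin n → ℝ)
    (hU' : U * star U = 1)
    (hd : star U * ρ * U = diagonal (fun i => (lam i : ℂ)))
    (hpos : ∀ i, 0 < lam i)
    (h : Z * ρ + ρ * Z = Complex.I • (X * ρ - ρ * X)) (j k : Fin n) :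
    (star U * Z * U) j k
      = Complex.I * (((lam k : ℂ) - lam j) / ((lam j : ℂ) + lam k)) * (star U * X * U) j k := by
  set d : Matrix (Fin n) (Fin n) ℂ := diagonal (fun i => (lam i : ℂ)) with hdd
  set Y := star U * X * U with hY
  set W := star U * Z * U with hW
  have hT : ∀ A B : Matrix (Fin n) (Fin n) ℂ,
      star U * (A * B) * U = (star U * A * U) * (star U * B * U) := by
    intro A B
    calc star U * (A * B) * U = star U * (A * (U * star U) * B) * U := by rw [hU']; noncomm_ring
      _ = (star U * A * U) * (star U * B * U) := by noncomm_ring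
  have h2 : W * d + d * W = Complex.I • (Y * d - d * Y) := by
    have := congrArg (fun A => star U * A * U) h
    simp only [Matrix.mul_add, Matrix.add_mul] at this
    rw [hT, hT, hd, mul_smul_comm, smul_mul_assoc, Matrix.mul_sub, Matrix.sub_mul,
      hT, hT, hd] at this
    exact this
  have h3 : W j k * (lam k : ℂ) + (lam j : ℂ) * W j k
      = Complex.I * (Y j k * (lam k : ℂ) - (lam j : ℂ) * Y j k) := by
    have := congrFun (congrFun h2 j) k
    simpa only [Matrix.add_apply, Matrix.smul_apply, Matrix.sub_apply, hdd,
      Matrix.mul_diagonal, Matrix.diagonal_mul, smul_eq_mul] using this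
  have hne : ((lam j : ℂ) + lam k) ≠ 0 := by
    have : (0:ℝ) < lam j + lam k := add_pos (hpos j) (hpos k)
    exact_mod_cast Complex.ofReal_ne_zero.mpr this.ne'
  field_simp
  linear_combination h3

/-- For a positive definite density matrix `ρ`, the commutation superoperator `D_ρ`
(defined by `D_ρ(X)ρ + ρD_ρ(X) = i(Xρ - ρX)`) has operator norm, with respect to the norm
induced by `⟨X,Y⟩ = Tr X*(ρY + Yρ)/2`, equal to
`max{|λ-μ|/(λ+μ) : λ, μ eigenvalues of ρ}`, and this value is strictly less than 1. -/
theorem commutationOperator_norm {n : ℕ} [NeZero n]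
    (ρ : Matrix (Fin n) (Fin n) ℂ) (hρ : ρ.PosDef) (htr : Matrix.trace ρ = 1)
    (D : Matrix (Fin n) (Fin n) ℂ →ₗ[ℂ] Matrix (Fin n) (Fin n) ℂ)
    (hD : ∀ X, D X * ρ + ρ * D X = Complex.I • (X * ρ - ρ * X)) :
    let nρ : Matrix (Fin n) (Fin n) ℂ → ℝ :=
      fun X => Real.sqrt ((Matrix.trace (Xᴴ * (ρ * X + X * ρ))).re / 2)
    let lam := hρ.1.eigenvalues
    let M : ℝ := ⨆ p : Fin n × Fin n, |lam p.1 - lam p.2| / (lam p.1 + lam p.2)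
    IsGreatest {r : ℝ | ∃ X, X ≠ 0 ∧ r = nρ (D X) / nρ X} M ∧ M < 1 := by
  intro nρ lam M
  classical
  have hne : Nonempty (Fin n) := ⟨⟨0, Nat.pos_of_ne_zero (NeZero.ne n)⟩⟩
  set U : Matrix (Fin n) (Fin n) ℂ := (hρ.1.eigenvectorUnitary : Matrix (Fin n) (Fin n) ℂ)
    with hUdef
  have hU' : U * star U = 1 := Matrix.mem_unitaryGroup_iff.mp hρ.1.eigenvectorUnitary.2
  have hU : star U * U = 1 := Matrix.mem_unitaryGroup_iff'.mp hρ.1.eigenvectorUnitary.2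
  have hd : star U * ρ * U = diagonal (fun i => (lam i : ℂ)) := by
    have h := hρ.1.conjStarAlgAut_star_eigenvectorUnitary
    rw [Unitary.conjStarAlgAut_star_apply] at h
    simpa [hUdef, Function.comp_def] using h
  have hpos : ∀ i, 0 < lam i := fun i => hρ.eigenvalues_pos i
  set g : Fin n × Fin n → ℝ := fun p => |lam p.1 - lam p.2| / (lam p.1 + lam p.2) with hg
  have hgnn : ∀ p, 0 ≤ g p := fun p =>
    div_nonneg (abs_nonneg _) (add_pos (hpos p.1) (hpos p.2)).le
  have hglt : ∀ p, g p < 1 := by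
    intro p
    rw [hg, div_lt_one (add_pos (hpos p.1) (hpos p.2))]
    rw [abs_sub_lt_iff]
    constructor <;> nlinarith [hpos p.1, hpos p.2]
  obtain ⟨p₀, hp₀⟩ := Finite.exists_max g
  have hM : M = g p₀ :=
    le_antisymm (ciSup_le hp₀) (le_ciSup (Set.finite_range g).bddAbove p₀)
  have hM0 : 0 ≤ M := hM ▸ hgnn p₀
  -- the weighted Frobenius functional
  set F : Matrix (Fin n) (Fin n) ℂ → ℝ :=
    fun Y => ∑ j, ∑ k, (lam j + lam k) * ‖Y j k‖^2 with hF
  have hnρ : ∀ X, nρ X = Real.sqrt (F (star U * X * U) / 2) := by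
    intro X
    show Real.sqrt ((Matrix.trace (Xᴴ * (ρ * X + X * ρ))).re / 2) = _
    rw [trace_formula' U ρ X lam hU' hd]
  have hentry : ∀ (X : Matrix (Fin n) (Fin n) ℂ) (j k : Fin n),
      (star U * D X * U) j k
        = Complex.I * (((lam k : ℂ) - lam j) / ((lam j : ℂ) + lam k)) * (star U * X * U) j k :=
    fun X => entry_eq' U ρ X (D X) lam hU' hd hpos (hD X)
  have hnorm : ∀ (X : Matrix (Fin n) (Fin n) ℂ) (j k : Fin n),
      ‖(star U * D X * U) j k‖ = g (j, k) * ‖(star U * X * U) j k‖ := by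
    intro X j k
    rw [hentry X j k, norm_mul, norm_mul, Complex.norm_I, one_mul, norm_div]
    have e1 : ((lam k : ℂ) - lam j) = ((lam k - lam j : ℝ) : ℂ) := by push_cast; ring
    have e2 : ((lam j : ℂ) + lam k) = ((lam j + lam k : ℝ) : ℂ) := by push_cast; ring
    rw [e1, e2, Complex.norm_real, Complex.norm_real,
      Real.norm_eq_abs, Real.norm_eq_abs, abs_of_pos (add_pos (hpos j) (hpos k))]
    rw [hg]
    simp only []
    rw [abs_sub_comm]
  -- F of D X bounded by M^2 * F X
  have hFle : ∀ X : Matrix (Fin n) (Fin n) ℂ,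
      F (star U * D X * U) ≤ M^2 * F (star U * X * U) := by
    intro X
    rw [hF]
    simp only []
    rw [Finset.mul_sum]
    refine Finset.sum_le_sum fun j _ => ?_
    rw [Finset.mul_sum]
    refine Finset.sum_le_sum fun k _ => ?_
    rw [hnorm X j k, mul_pow]
    have h1 : (g (j, k))^2 ≤ M^2 := by
      have := hM ▸ hp₀ (j, k)
      exact pow_le_pow_left₀ (hgnn (j,k)) this 2
    have h2 : 0 ≤ (lam j + lam k) * ‖(star U * X * U) j k‖^2 :=
      mul_nonneg (add_pos (hpos j) (hpos k)).le (sq_nonneg _)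
    calc (lam j + lam k) * ((g (j,k))^2 * ‖(star U * X * U) j k‖^2)
        = (g (j,k))^2 * ((lam j + lam k) * ‖(star U * X * U) j k‖^2) := by ring
      _ ≤ M^2 * ((lam j + lam k) * ‖(star U * X * U) j k‖^2) :=
          mul_le_mul_of_nonneg_right h1 h2
  -- positivity of F for nonzero matrices
  have hFpos : ∀ Y : Matrix (Fin n) (Fin n) ℂ, Y ≠ 0 → 0 < F Y := by
    intro Y hY
    obtain ⟨j₀, k₀, h0⟩ : ∃ j k, Y j k ≠ 0 := by
      by_contra h
      push_neg at h
      exact hY (by ext j k; simp [h j k])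
    rw [hF]
    refine Finset.sum_pos' (fun j _ => Finset.sum_nonneg fun k _ =>
        mul_nonneg (add_pos (hpos j) (hpos _)).le (sq_nonneg _)) ⟨j₀, Finset.mem_univ _, ?_⟩
    refine Finset.sum_pos' (fun k _ =>
        mul_nonneg (add_pos (hpos j₀) (hpos _)).le (sq_nonneg _)) ⟨k₀, Finset.mem_univ _, ?_⟩
    exact mul_pos (add_pos (hpos j₀) (hpos k₀)) (pow_pos (norm_pos_iff.mpr h0) 2)
  have hYne : ∀ X : Matrix (Fin n) (Fin n) ℂ, X ≠ 0 → star U * X * U ≠ 0 := by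
    intro X hX h0
    apply hX
    have : U * (star U * X * U) * star U = X := by
      calc U * (star U * X * U) * star U = (U * star U) * X * (U * star U) := by noncomm_ring
        _ = X := by rw [hU']; noncomm_ring
    rw [← this, h0]
    simp
  constructor
  constructor
  · -- membership: the sup is attained
    refine ⟨U * single p₀.1 p₀.2 (1:ℂ) * star U, ?_, ?_⟩
    case refine_1 =>
      intro h0
      have : star U * (U * single p₀.1 p₀.2 (1:ℂ) * star U) * U
          = single p₀.1 p₀.2 (1:ℂ) := by
        calc star U * (U * single p₀.1 p₀.2 (1:ℂ) * star U) * U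
            = (star U * U) * single p₀.1 p₀.2 (1:ℂ) * (star U * U) := by noncomm_ring
          _ = _ := by rw [hU]; noncomm_ring
      rw [h0] at this
      simp only [Matrix.mul_zero, Matrix.zero_mul] at this
      have := congrFun (congrFun this p₀.1) p₀.2
      simp at this
    case refine_2 =>
      set X₀ := U * single p₀.1 p₀.2 (1:ℂ) * star U with hX₀
      have hYX₀ : star U * X₀ * U = single p₀.1 p₀.2 (1:ℂ) := by
        calc star U * X₀ * U
            = (star U * U) * single p₀.1 p₀.2 (1:ℂ) * (star U * U) := by
              rw [hX₀]; noncomm_ring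
          _ = _ := by rw [hU]; noncomm_ring
      have hnormE : ∀ j k, ‖single p₀.1 p₀.2 (1:ℂ) j k‖^2
          = if j = p₀.1 ∧ k = p₀.2 then 1 else 0 := by
        intro j k
        by_cases h1 : j = p₀.1 ∧ k = p₀.2
        · obtain ⟨ha, hb⟩ := h1; subst ha; subst hb
          simp [Matrix.single_apply_same]
        · rw [if_neg h1]
          have : single p₀.1 p₀.2 (1:ℂ) j k = 0 := by
            rw [Matrix.single, Matrix.of_apply]
            rw [if_neg]
            intro ⟨ha, hb⟩; exact h1 ⟨ha.symm, hb.symm⟩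
          simp [this]
      have hsum : ∀ c : ℝ, (∑ j, ∑ k, (lam j + lam k) *
          (c * (if j = p₀.1 ∧ k = p₀.2 then 1 else 0)))
          = (lam p₀.1 + lam p₀.2) * c := by
        intro c
        rw [Finset.sum_eq_single p₀.1]
        · rw [Finset.sum_eq_single p₀.2]
          · simp
          · intro k _ hk; simp [hk]
          · intro h; exact absurd (Finset.mem_univ _) h
        · intro j _ hj
          apply Finset.sum_eq_zero
          intro k _
          simp [hj]
        · intro h; exact absurd (Finset.mem_univ _) h
      have hFY : F (star U * X₀ * U) = lam p₀.1 + lam p₀.2 := by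
        rw [hF]
        simp only [hYX₀]
        calc (∑ j, ∑ k, (lam j + lam k) * ‖single p₀.1 p₀.2 (1:ℂ) j k‖^2)
            = ∑ j, ∑ k, (lam j + lam k) * ((1:ℝ) * if j = p₀.1 ∧ k = p₀.2 then 1 else 0) := by
              exact Finset.sum_congr rfl fun j _ => Finset.sum_congr rfl fun k _ => by
                rw [hnormE j k, one_mul]
          _ = (lam p₀.1 + lam p₀.2) * 1 := hsum 1
          _ = _ := mul_one _
      have hFZ : F (star U * D X₀ * U) = (lam p₀.1 + lam p₀.2) * (g p₀)^2 := by
        rw [hF]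
        simp only []
        rw [← hsum ((g p₀)^2)]
        refine Finset.sum_congr rfl fun j _ => Finset.sum_congr rfl fun k _ => ?_
        rw [hnorm X₀ j k, hYX₀, mul_pow, hnormE j k]
        congr 1
        by_cases h1 : j = p₀.1 ∧ k = p₀.2
        · obtain ⟨ha, hb⟩ := h1; subst ha; subst hb
          simp
        · simp [if_neg h1]
      have hs : 0 < lam p₀.1 + lam p₀.2 := add_pos (hpos p₀.1) (hpos p₀.2)
      rw [hnρ, hnρ, hFY, hFZ, hM]
      rw [show (lam p₀.1 + lam p₀.2) * (g p₀)^2 / 2 = (g p₀)^2 * ((lam p₀.1 + lam p₀.2)/2) by ring]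
      rw [Real.sqrt_mul (sq_nonneg _), Real.sqrt_sq (hgnn p₀)]
      rw [mul_div_assoc, div_self (by positivity), mul_one]
  · -- upper bound
    rintro r ⟨X, hX, rfl⟩
    rw [hnρ, hnρ]
    have hFY := hFpos _ (hYne X hX)
    have h1 : Real.sqrt (F (star U * D X * U) / 2)
        ≤ M * Real.sqrt (F (star U * X * U) / 2) := by
      rw [← Real.sqrt_sq hM0, ← Real.sqrt_mul (sq_nonneg M)]
      apply Real.sqrt_le_sqrt
      calc F (star U * D X * U) / 2 ≤ M^2 * F (star U * X * U) / 2 := by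
            linarith [hFle X]
        _ = M^2 * (F (star U * X * U) / 2) := by ring
    rw [div_le_iff₀ (Real.sqrt_pos.mpr (by positivity))]
    exact h1
  · exact hM ▸ hglt p₀
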